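/- arXiv:2308.10655 — 2 statements merged into one kernel-verified Lean document; each statement's English description precedes it below -/
import Mathlib

section
/- Let p be any primitive and p_1, ..., p_n be primitives, each either a tell primitive or a graphical primitive, and let F be a propositional state formula on stores. Assume that the si-terms told by the tell primitives among p_1, ..., p_n are distinct from all si-terms occurring in F (so that telling them does not change the truth value of F on any store). Then the guarded list GL = [p → p_1,...,p_n] is an F-preserving contraction of the sequential composition SC = p; p_1; ...; p_n: for every store τ, Oh(GL)(τ) is an F-preserving contraction of Oh(SC)(τ). It follows that the reachability formula Reach(F) holds of the executions of SC from any store τ if and only if it holds of the executions of GL from τ. -/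
namespace Bach

/-- Primitives: the store primitives tell/ask/nask/get over si-terms `I`,
together with graphical primitives from `G`. -/
inductive Prim (I : Type) (G : Type) where
  | tell (t : I)
  | ask (t : I)
  | nask (t : I)
  | get (t : I)
  | gr (g : G)

/-- A store is a finite multiset of si-terms. -/
abbrev Store (I : Type) := Multiset I

/-- One-step semantics of primitives: `primStep p σ τ` iff `⟨p,σ⟩ → ⟨E,τ⟩`:
`tell(t)` adds `t`; `ask(t)` requires `t` present; `nask(t)` requires `t` absent;
`get(t)` removes one occurrence of `t`; graphical primitives always succeed
leaving the store unchanged. -/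
def primStep {I G : Type} : Prim I G → Store I → Store I → Prop
  | .tell t, σ, τ => τ = t ::ₘ σ
  | .ask t, σ, τ => t ∈ σ ∧ τ = σ
  | .nask t, σ, τ => t ∉ σ ∧ τ = σ
  | .get t, σ, τ => σ = t ::ₘ τ
  | .gr _, σ, τ => τ = σ

/-- Successive execution of a list of primitives. -/
def listExec {I G : Type} : List (Prim I G) → Store I → Store I → Prop
  | [], σ, τ => τ = σ
  | p :: l, σ, τ => ∃ ρ, primStep p σ ρ ∧ listExec l ρ τ

/-- Agents: primitives, guarded lists `[p → p₁,…,pₙ]`, sequential (`;`),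
parallel (`∥`) and choice (`+`) composition. -/
inductive Agent (I : Type) (G : Type) where
  | prim (p : Prim I G)
  | glist (p : Prim I G) (l : List (Prim I G))
  | seq (A B : Agent I G)
  | par (A B : Agent I G)
  | choice (A B : Agent I G)

/-- Transition relation: `Step A σ o τ` means `⟨A,σ⟩ → ⟨o,τ⟩`, where `o = none`
stands for the terminated symbol `E` (and `E;A`, `E∥A`, `A∥E` are identified
with `A`).  A guarded list makes a single transition from `σ` to `τ` iff its
guard makes a transition from `σ` to some `ρ` and executing the remaining
primitives successively from `ρ` ends in `τ`. -/
inductive Step {I G : Type} : Agent I G → Store I → Option (Agent I G) → Store I → Prop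
  | prim {p σ τ} : primStep p σ τ → Step (.prim p) σ none τ
  | glist {p l σ ρ τ} : primStep p σ ρ → listExec l ρ τ → Step (.glist p l) σ none τ
  | seqE {A B σ τ} : Step A σ none τ → Step (.seq A B) σ (some B) τ
  | seqS {A A' B σ τ} : Step A σ (some A') τ → Step (.seq A B) σ (some (.seq A' B)) τ
  | parLE {A B σ τ} : Step A σ none τ → Step (.par A B) σ (some B) τ
  | parLS {A A' B σ τ} : Step A σ (some A') τ → Step (.par A B) σ (some (.par A' B)) τ
  | parRE {A B σ τ} : Step B σ none τ → Step (.par A B) σ (some A) τ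
  | parRS {A B B' σ τ} : Step B σ (some B') τ → Step (.par A B) σ (some (.par A B')) τ
  | choiceL {A B σ o τ} : Step A σ o τ → Step (.choice A B) σ o τ
  | choiceR {A B σ o τ} : Step B σ o τ → Step (.choice A B) σ o τ

/-- Configurations `⟨A,σ⟩`, with `none` standing for the terminated symbol `E`. -/
abbrev Conf (I G : Type) := Option (Agent I G) × Store I

/-- Step relation on configurations. -/
def CStep {I G : Type} : Conf I G → Conf I G → Prop
  | (some A, σ), (o, τ) => Step A σ o τ
  | (none, _), _ => False

/-- Observables `Of(A)`: final stores of finite computations from the empty store,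
marked `true` (= δ⁺, success: ending in `E`) or `false` (= δ⁻, deadlock: ending
stuck in some agent `B ≠ E`). -/
def Obs {I G : Type} (A : Agent I G) : Set (Store I × Bool) :=
  {x | Relation.ReflTransGen CStep ((some A, (0 : Store I)) : Conf I G) (none, x.1) ∧
        x.2 = true}
  ∪ {x | (∃ B, Relation.ReflTransGen CStep ((some A, (0 : Store I)) : Conf I G) (some B, x.1) ∧
          ∀ c, ¬ CStep ((some B, x.1) : Conf I G) c) ∧ x.2 = false}

/-- A language is a set of agents closed under `;`, `∥` and `+`. -/
def IsLanguage {I G : Type} (L : Set (Agent I G)) : Prop :=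
  (∀ A B, A ∈ L → B ∈ L → Agent.seq A B ∈ L) ∧
  (∀ A B, A ∈ L → B ∈ L → Agent.par A B ∈ L) ∧
  (∀ A B, A ∈ L → B ∈ L → Agent.choice A B ∈ L)

/-- `IsModularEmbedding C D L' L`: the coder `C` maps `L'` into `L` and is
compositional w.r.t. `;`, `∥`, `+` (property P₂); the element-wise decoder `D`
preserves the termination mark δ⁺/δ⁻ (property P₃); and for every `A ∈ L'`,
`Of(A) = { D x : x ∈ Of(C A) }` (commuting diagram, with P₁ built in by taking
`D` element-wise). -/
def IsModularEmbedding {I G : Type} (C : Agent I G → Agent I G)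
    (D : Store I × Bool → Store I × Bool) (L' L : Set (Agent I G)) : Prop :=
  (∀ A ∈ L', C A ∈ L) ∧
  (∀ A B, A ∈ L' → B ∈ L' → C (Agent.seq A B) = Agent.seq (C A) (C B)) ∧
  (∀ A B, A ∈ L' → B ∈ L' → C (Agent.par A B) = Agent.par (C A) (C B)) ∧
  (∀ A B, A ∈ L' → B ∈ L' → C (Agent.choice A B) = Agent.choice (C A) (C B)) ∧
  (∀ x, (D x).2 = x.2) ∧
  (∀ A ∈ L', Obs A = D '' Obs (C A))

/-- Modular embedding of `L'` into `L`, written `L' ≤ L`. -/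
def ModEmbed {I G : Type} (L' L : Set (Agent I G)) : Prop :=
  ∃ C D, IsModularEmbedding C D L' L

/-- Kinds of store primitives. -/
inductive PKind where
  | ask | nask | get | tell

/-- The primitive uses only store-primitive kinds from `X`
(graphical primitives are always allowed). -/
def primIn {I G : Type} (X : Set PKind) : Prim I G → Prop
  | .tell _ => PKind.tell ∈ X
  | .ask _ => PKind.ask ∈ X
  | .nask _ => PKind.nask ∈ X
  | .get _ => PKind.get ∈ X
  | .gr _ => True

/-- All primitives occurring in the agent use only kinds from `X`. -/
def agentIn {I G : Type} (X : Set PKind) : Agent I G → Prop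
  | .prim p => primIn X p
  | .glist p l => primIn X p ∧ ∀ q ∈ l, primIn X q
  | .seq A B => agentIn X A ∧ agentIn X B
  | .par A B => agentIn X A ∧ agentIn X B
  | .choice A B => agentIn X A ∧ agentIn X B

/-- The agent contains no guarded list construct. -/
def glFree {I G : Type} : Agent I G → Prop
  | .prim _ => True
  | .glist _ _ => False
  | .seq A B => glFree A ∧ glFree B
  | .par A B => glFree A ∧ glFree B
  | .choice A B => glFree A ∧ glFree B

/-- `gdLg(X)`: the fragment with guarded lists using store primitives from `X`. -/
def gdLg {I G : Type} (X : Set PKind) : Set (Agent I G) := {A | agentIn X A}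

/-- `rLg(X)`: the fragment without guarded lists using store primitives from `X`. -/
def rLg {I G : Type} (X : Set PKind) : Set (Agent I G) := {A | agentIn X A ∧ glFree A}

/-- Computational histories: finite sequences of stores ended by a success mark
δ⁺ (`true`) or deadlock mark δ⁻ (`false`), or infinite sequences of stores. -/
inductive Hist (I : Type) where
  | fin (l : List (Store I)) (success : Bool)
  | inf (f : ℕ → Store I)

/-- History-based operational semantics `Oh(A)(τ)`: the sequences of stores along
maximal transition sequences from `⟨A,τ⟩`, marked δ⁺ if ending in `E`, δ⁻ if
ending stuck in a non-`E` agent, and infinite otherwise. -/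
def Oh {I G : Type} (A : Agent I G) (τ : Store I) : Set (Hist I) :=
  {h | ∃ cs : List (Conf I G),
      cs.Chain' CStep ∧ cs.head? = some (some A, τ) ∧
      (((∃ σ, cs.getLast? = some ((none : Option (Agent I G)), σ)) ∧
          h = Hist.fin (cs.map Prod.snd) true) ∨
       ((∃ B σ, cs.getLast? = some (some B, σ) ∧ ∀ c, ¬ CStep ((some B, σ) : Conf I G) c) ∧
          h = Hist.fin (cs.map Prod.snd) false))}
  ∪ {h | ∃ f : ℕ → Conf I G, f 0 = (some A, τ) ∧ (∀ n, CStep (f n) (f (n + 1))) ∧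
      h = Hist.inf fun n => (f n).2}

/-- `Contraction h_c h` (`h_c ⪯ h`): `h_c` is obtained from `h` by removing
finitely many (possibly zero) stores, never a termination mark. -/
def Contraction {I : Type} : Hist I → Hist I → Prop
  | .fin lc bc, .fin l b => bc = b ∧ lc.Sublist l
  | .inf fc, .inf f =>
      ∃ g : ℕ → ℕ, StrictMono g ∧ (Set.range g)ᶜ.Finite ∧ ∀ n, fc n = f (g n)
  | _, _ => False

/-- `FCon F lc l`: the list `lc` of stores is an F-preserving contraction of `l`:
each removed store `ρ` agrees on `F` with the next kept store. -/
inductive FCon {I : Type} (F : Store I → Prop) : List (Store I) → List (Store I) → Prop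
  | nil : FCon F [] []
  | keep {σ lc l} : FCon F lc l → FCon F (σ :: lc) (σ :: l)
  | drop {σ ρ lc l} : (F ρ ↔ F σ) → FCon F (σ :: lc) l → FCon F (σ :: lc) (ρ :: l)

/-- `FPCon F h_c h` (`h_c ≪_F h`): `h_c` is an F-preserving contraction of `h`:
a contraction in which every removed store agrees on `F` with the next kept store. -/
def FPCon {I : Type} (F : Store I → Prop) : Hist I → Hist I → Prop
  | .fin lc bc, .fin l b => bc = b ∧ FCon F lc l
  | .inf fc, .inf f =>
      ∃ g : ℕ → ℕ, StrictMono g ∧ (Set.range g)ᶜ.Finite ∧ (∀ n, fc n = f (g n)) ∧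
        ∀ m, m ∉ Set.range g → ∀ n, m < g n → (∀ k < n, g k < m) → (F (f m) ↔ F (f (g n)))
  | _, _ => False

/-- Primitives that always succeed without consulting the store:
tell primitives and graphical primitives. -/
def safePrim {I G : Type} : Prim I G → Prop
  | .tell _ => True
  | .gr _ => True
  | _ => False

/-- The sequential composition `p; p₁; ⋯; pₙ` of a nonempty list of primitives. -/
def seqComp {I G : Type} (p : Prim I G) : List (Prim I G) → Agent I G
  | [] => .prim p
  | q :: l => .seq (.prim p) (seqComp q l)

/-- The history contains a store satisfying `F` (reachability of `F`). -/
def histReach {I : Type} (F : Store I → Prop) : Hist I → Prop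
  | .fin l _ => ∃ σ ∈ l, F σ
  | .inf f => ∃ n, F (f n)

/-- A head is a primitive or a guarded list of primitives. -/
def isHead {I G : Type} : Agent I G → Prop
  | .prim _ => True
  | .glist _ _ => True
  | _ => False

/-- Agents in normal form: `N ::= p | p;A | N+N`, where `p` is a primitive
(store-related or graphical) or a guarded list and `A` is an arbitrary agent. -/
inductive NormalForm {I G : Type} : Agent I G → Prop
  | head {p : Agent I G} : isHead p → NormalForm p
  | seq {p A : Agent I G} : isHead p → NormalForm (Agent.seq p A)
  | choice {N₁ N₂ : Agent I G} : NormalForm N₁ → NormalForm N₂ →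
      NormalForm (Agent.choice N₁ N₂)

/-- Left merge `⌊`: `p⌊Z = p;Z`, `(p;A)⌊Z = p;(A∥Z)`, `(N₁+N₂)⌊Z = N₁⌊Z + N₂⌊Z`. -/
def lmerge {I G : Type} : Agent I G → Agent I G → Agent I G
  | .prim p, Z => .seq (.prim p) Z
  | .glist p l, Z => .seq (.glist p l) Z
  | .seq (.prim p) A, Z => .seq (.prim p) (.par A Z)
  | .seq (.glist p l) A, Z => .seq (.glist p l) (.par A Z)
  | .choice N₁ N₂, Z => .choice (lmerge N₁ Z) (lmerge N₂ Z)
  | N, Z => .seq N Z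

/-- The normalization translation τ: `τ(p) = p`, `τ(X;Y) = τ(X);Y`,
`τ(X+Y) = τ(X)+τ(Y)`, `τ(X∥Y) = τ(X)⌊Y + τ(Y)⌊X`. -/
def tauNF {I G : Type} : Agent I G → Agent I G
  | .prim p => .prim p
  | .glist p l => .glist p l
  | .seq X Y => .seq (tauNF X) Y
  | .choice X Y => .choice (tauNF X) (tauNF Y)
  | .par X Y => .choice (lmerge (tauNF X) Y) (lmerge (tauNF Y) X)

end Bach

open Bach

namespace Bach

variable {I G : Type}

/-- Result store of a safe primitive. -/
def primRes : Prim I G → Store I → Store I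
  | .tell t, ρ => t ::ₘ ρ
  | _, ρ => ρ

/-- Final store after executing a list of safe primitives. -/
def finalStore : List (Prim I G) → Store I → Store I
  | [], ρ => ρ
  | q :: l, ρ => finalStore l (primRes q ρ)

/-- Stores along the execution of a list of safe primitives. -/
def storesOf : List (Prim I G) → Store I → List (Store I)
  | [], ρ => [ρ]
  | q :: l, ρ => ρ :: storesOf l (primRes q ρ)

/-- Configurations along the execution of `seqComp` after the guard has fired. -/
def scConfs : List (Prim I G) → Store I → List (Conf I G)
  | [], ρ => [(none, ρ)]
  | q :: l, ρ => (some (seqComp q l), ρ) :: scConfs l (primRes q ρ)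

lemma primStep_primRes {q : Prim I G} (hq : safePrim q) (ρ : Store I) :
    primStep q ρ (primRes q ρ) := by
  cases q <;> first | rfl | exact hq.elim

lemma primStep_safe_eq {q : Prim I G} (hq : safePrim q) {ρ τ : Store I}
    (h : primStep q ρ τ) : τ = primRes q ρ := by
  cases q <;> first | exact h | exact hq.elim

lemma listExec_finalStore {l : List (Prim I G)} (hl : ∀ q ∈ l, safePrim q) (ρ : Store I) :
    listExec l ρ (finalStore l ρ) := by
  induction l generalizing ρ with
  | nil => rfl
  | cons q l ih =>
    exact ⟨primRes q ρ, primStep_primRes (hl q (by simp)) ρ,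
      ih (fun r hr => hl r (by simp [hr])) _⟩

lemma listExec_eq {l : List (Prim I G)} (hl : ∀ q ∈ l, safePrim q) {ρ τ : Store I}
    (h : listExec l ρ τ) : τ = finalStore l ρ := by
  induction l generalizing ρ with
  | nil => exact h
  | cons q l ih =>
    obtain ⟨ρ', hq, hrest⟩ := h
    have := primStep_safe_eq (hl q (by simp)) hq
    subst this
    exact ih (fun r hr => hl r (by simp [hr])) hrest

lemma F_primRes {F : Store I → Prop} {l : List (Prim I G)}
    (hF : ∀ t : I, Prim.tell t ∈ l → ∀ σ : Store I, F (t ::ₘ σ) ↔ F σ)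
    {q : Prim I G} (hq : q ∈ l) (ρ : Store I) : F (primRes q ρ) ↔ F ρ := by
  cases q with
  | tell t => exact hF t hq ρ
  | _ => exact Iff.rfl

lemma F_finalStore {F : Store I → Prop} {l : List (Prim I G)}
    (hF : ∀ t : I, Prim.tell t ∈ l → ∀ σ : Store I, F (t ::ₘ σ) ↔ F σ) (ρ : Store I) :
    F (finalStore l ρ) ↔ F ρ := by
  induction l generalizing ρ with
  | nil => exact Iff.rfl
  | cons q l ih =>
    have h1 := ih (fun t ht σ => hF t (List.mem_cons_of_mem _ ht) σ) (primRes q ρ)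
    exact h1.trans (F_primRes hF (by simp) ρ)

lemma fcon_storesOf {F : Store I → Prop} {l : List (Prim I G)}
    (hF : ∀ t : I, Prim.tell t ∈ l → ∀ σ : Store I, F (t ::ₘ σ) ↔ F σ) (ρ : Store I) :
    FCon F [finalStore l ρ] (storesOf l ρ) := by
  induction l generalizing ρ with
  | nil => exact .keep .nil
  | cons q l ih =>
    have hF' : ∀ t : I, Prim.tell t ∈ l → ∀ σ : Store I, F (t ::ₘ σ) ↔ F σ :=
      fun t ht σ => hF t (List.mem_cons_of_mem _ ht) σ
    exact .drop (((F_finalStore hF' (primRes q ρ)).trans (F_primRes hF (by simp) ρ)).symm)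
      (ih hF' (primRes q ρ))

lemma F_mem_storesOf {F : Store I → Prop} {l : List (Prim I G)}
    (hF : ∀ t : I, Prim.tell t ∈ l → ∀ σ : Store I, F (t ::ₘ σ) ↔ F σ) {ρ σ : Store I}
    (hσ : σ ∈ storesOf l ρ) : F σ ↔ F (finalStore l ρ) := by
  induction l generalizing ρ with
  | nil =>
    rcases List.mem_singleton.mp hσ with rfl; exact Iff.rfl
  | cons q l ih =>
    have hF' : ∀ t : I, Prim.tell t ∈ l → ∀ σ : Store I, F (t ::ₘ σ) ↔ F σ :=
      fun t ht σ => hF t (List.mem_cons_of_mem _ ht) σ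
    rcases List.mem_cons.mp hσ with rfl | hσ'
    · exact ((F_finalStore hF' (primRes q σ)).trans (F_primRes hF (by simp) σ)).symm
    · exact ih hF' hσ'

lemma map_snd_scConfs (l : List (Prim I G)) (ρ : Store I) :
    (scConfs l ρ).map Prod.snd = storesOf l ρ := by
  induction l generalizing ρ with
  | nil => rfl
  | cons q l ih => simp [scConfs, storesOf, ih]

lemma scConfs_ne_nil (l : List (Prim I G)) (ρ : Store I) : scConfs l ρ ≠ [] := by
  cases l <;> simp [scConfs]

lemma getLast?_cons_of_ne_nil {α : Type*} (a : α) {l : List α} (h : l ≠ []) :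
    (a :: l).getLast? = l.getLast? := by
  cases l with
  | nil => exact absurd rfl h
  | cons b l => exact List.getLast?_cons_cons

lemma getLast?_scConfs (l : List (Prim I G)) (ρ : Store I) :
    (scConfs l ρ).getLast? = some ((none : Option (Agent I G)), finalStore l ρ) := by
  induction l generalizing ρ with
  | nil => rfl
  | cons q l ih =>
    show ((some (seqComp q l), ρ) :: scConfs l (primRes q ρ)).getLast? = _
    rw [getLast?_cons_of_ne_nil _ (scConfs_ne_nil l _), ih]
    rfl

lemma chain_scConfs {l : List (Prim I G)} (hl : ∀ q ∈ l, safePrim q)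
    {p : Prim I G} {τ ρ : Store I} (hp : primStep p τ ρ) :
    List.Chain' CStep ((some (seqComp p l), τ) :: scConfs l ρ) := by
  induction l generalizing p τ ρ with
  | nil => exact List.isChain_pair.mpr (Step.prim hp)
  | cons q l ih =>
    refine List.isChain_cons_cons.mpr ⟨Step.seqE (Step.prim hp), ?_⟩
    exact ih (fun r hr => hl r (by simp [hr])) (primStep_primRes (hl q (by simp)) ρ)

lemma seqComp_safe_step {q : Prim I G} (hq : safePrim q) (l' : List (Prim I G))
    (σ : Store I) : ∃ c, CStep ((some (seqComp q l'), σ) : Conf I G) c := by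
  cases l' with
  | nil => exact ⟨(none, primRes q σ), Step.prim (primStep_primRes hq σ)⟩
  | cons r l'' =>
    exact ⟨(some (seqComp r l''), primRes q σ), Step.seqE (Step.prim (primStep_primRes hq σ))⟩

lemma gl_stuck_of_prim {p : Prim I G} {l : List (Prim I G)} {τ : Store I}
    (hp : ∀ ρ, ¬ primStep p τ ρ) :
    ∀ c, ¬ CStep ((some (Agent.glist p l), τ) : Conf I G) c := by
  rintro ⟨o, σ⟩ h
  cases h with
  | glist hpp _ => exact hp _ hpp

lemma prim_stuck_of_gl {p : Prim I G} {l : List (Prim I G)} {τ : Store I}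
    (hl : ∀ q ∈ l, safePrim q)
    (hstuck : ∀ c, ¬ CStep ((some (Agent.glist p l), τ) : Conf I G) c) :
    ∀ ρ, ¬ primStep p τ ρ :=
  fun ρ hp => hstuck (none, finalStore l ρ) (Step.glist hp (listExec_finalStore hl ρ))

lemma sc_stuck_of_prim {p : Prim I G} {l : List (Prim I G)} {τ : Store I}
    (hp : ∀ ρ, ¬ primStep p τ ρ) :
    ∀ c, ¬ CStep ((some (seqComp p l), τ) : Conf I G) c := by
  rintro ⟨o, σ⟩ h
  cases l with
  | nil =>
    cases h with
    | prim hpp => exact hp _ hpp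
  | cons q l' =>
    cases h with
    | seqE hA => cases hA with | prim hpp => exact hp _ hpp
    | seqS hA => cases hA

lemma prim_stuck_of_sc {p : Prim I G} {l : List (Prim I G)} {τ : Store I}
    (hstuck : ∀ c, ¬ CStep ((some (seqComp p l), τ) : Conf I G) c) :
    ∀ ρ, ¬ primStep p τ ρ := by
  intro ρ hp
  cases l with
  | nil => exact hstuck (none, ρ) (Step.prim hp)
  | cons q l' => exact hstuck (some (seqComp q l'), ρ) (Step.seqE (Step.prim hp))

/-- Size of agents, strictly decreasing along transitions. -/
def asize : Agent I G → ℕ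
  | .prim _ => 1
  | .glist _ _ => 1
  | .seq A B => asize A + asize B
  | .par A B => asize A + asize B
  | .choice A B => asize A + asize B

def osize : Option (Agent I G) → ℕ
  | none => 0
  | some A => asize A

lemma asize_pos (A : Agent I G) : 0 < asize A := by
  induction A <;> simp [asize] <;> omega

lemma step_size {A : Agent I G} {σ τ : Store I} {o : Option (Agent I G)}
    (h : Step A σ o τ) : osize o < asize A := by
  induction h with
  | prim _ => simp [asize, osize]
  | glist _ _ => simp [asize, osize]
  | @seqE A B _ _ _ => have := asize_pos (I := I) (G := G) A; simp [asize, osize]; omega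
  | @seqS A A' B _ _ _ ih => simp only [asize, osize] at ih ⊢; omega
  | @parLE A B _ _ _ => have := asize_pos (I := I) (G := G) A; simp [asize, osize]; omega
  | @parLS A A' B _ _ _ ih => simp only [asize, osize] at ih ⊢; omega
  | @parRE A B _ _ _ => have := asize_pos (I := I) (G := G) B; simp [asize, osize]; omega
  | @parRS A B B' _ _ _ ih => simp only [asize, osize] at ih ⊢; omega
  | @choiceL A B _ _ _ _ ih => have := asize_pos (I := I) (G := G) B; simp only [asize]; omega
  | @choiceR A B _ _ _ _ ih => have := asize_pos (I := I) (G := G) A; simp only [asize]; omega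

lemma no_inf (f : ℕ → Conf I G) (hf : ∀ n, CStep (f n) (f (n + 1))) : False := by
  have key : ∀ n, osize (f (n + 1)).1 < osize (f n).1 := by
    intro n
    have h := hf n
    rcases h1 : f n with ⟨o, σ⟩
    rw [h1] at h
    cases o with
    | none => exact h.elim
    | some A =>
      rcases h2 : f (n + 1) with ⟨o', τ⟩
      rw [h2] at h
      exact step_size h
  have hle : ∀ n, osize (f n).1 + n ≤ osize (f 0).1 := by
    intro n
    induction n with
    | zero => simp
    | succ n ih => have := key n; omega
  have := hle (osize (f 0).1 + 1)
  omega

/-- Inversion of success chains of a guarded list or a single guard failure. -/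
lemma gl_chain_inv {p : Prim I G} {l : List (Prim I G)} {τ : Store I}
    {cs : List (Conf I G)} (hch : cs.Chain' CStep)
    (hhd : cs.head? = some (some (Agent.glist p l), τ)) :
    cs = [(some (Agent.glist p l), τ)] ∨
    ∃ ρ φ, primStep p τ ρ ∧ listExec l ρ φ ∧
      cs = [(some (Agent.glist p l), τ), ((none : Option (Agent I G)), φ)] := by
  cases cs with
  | nil => simp at hhd
  | cons c0 cs' =>
    rw [List.head?_cons] at hhd
    injection hhd with hc0; subst hc0
    cases cs' with
    | nil => exact Or.inl rfl
    | cons c1 cs'' =>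
      obtain ⟨hR, hch'⟩ := List.isChain_cons_cons.mp hch
      rcases c1 with ⟨o₁, σ₁⟩
      cases hR with
      | glist hp hle =>
        cases cs'' with
        | nil => exact Or.inr ⟨_, _, hp, hle, rfl⟩
        | cons c2 _ => exact ((List.isChain_cons_cons.mp hch').1).elim

/-- Inversion of chains of `seqComp` ending in a terminated configuration. -/
lemma sc_chain_success {l : List (Prim I G)} :
    (∀ q ∈ l, safePrim q) → ∀ {p : Prim I G} {τ : Store I} {cs : List (Conf I G)},
    cs.Chain' CStep → cs.head? = some (some (seqComp p l), τ) →
    ∀ {σf : Store I}, cs.getLast? = some ((none : Option (Agent I G)), σf) →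
    ∃ ρ, primStep p τ ρ ∧ cs = (some (seqComp p l), τ) :: scConfs l ρ := by
  induction l with
  | nil =>
    intro _ p τ cs hch hhd σf hlast
    cases cs with
    | nil => simp at hhd
    | cons c0 cs' =>
      rw [List.head?_cons] at hhd
      injection hhd with hc0; subst hc0
      cases cs' with
      | nil => simp [seqComp] at hlast
      | cons c1 cs'' =>
        obtain ⟨hR, hch'⟩ := List.isChain_cons_cons.mp hch
        rcases c1 with ⟨o₁, σ₁⟩
        cases hR with
        | prim hp =>
          cases cs'' with
          | nil => exact ⟨σ₁, hp, rfl⟩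
          | cons c2 _ => exact ((List.isChain_cons_cons.mp hch').1).elim
  | cons q l' ih =>
    intro hl p τ cs hch hhd σf hlast
    have hl' : ∀ r ∈ l', safePrim r := fun r hr => hl r (by simp [hr])
    cases cs with
    | nil => simp at hhd
    | cons c0 cs' =>
      rw [List.head?_cons] at hhd
      injection hhd with hc0; subst hc0
      cases cs' with
      | nil => simp [seqComp] at hlast
      | cons c1 cs'' =>
        obtain ⟨hR, hch'⟩ := List.isChain_cons_cons.mp hch
        rcases c1 with ⟨o₁, σ₁⟩
        cases hR with
        | seqS hA => cases hA
        | seqE hA =>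
          cases hA with
          | prim hp =>
            have hlast' : ((some (seqComp q l'), σ₁) :: cs'').getLast? = some (none, σf) := by
              rwa [getLast?_cons_of_ne_nil _ (by simp)] at hlast
            obtain ⟨ρ', hq, heq⟩ := ih hl' hch' rfl hlast'
            have := primStep_safe_eq (hl q (by simp)) hq
            subst this
            exact ⟨σ₁, hp, by rw [heq]; rfl⟩

/-- Inversion of chains of `seqComp` ending in a stuck configuration. -/
lemma sc_chain_deadlock {l : List (Prim I G)} :
    (∀ q ∈ l, safePrim q) → ∀ {p : Prim I G} {τ : Store I} {cs : List (Conf I G)},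
    cs.Chain' CStep → cs.head? = some (some (seqComp p l), τ) →
    ∀ {B : Agent I G} {σf : Store I}, cs.getLast? = some (some B, σf) →
    (∀ c, ¬ CStep ((some B, σf) : Conf I G) c) →
    cs = [(some (seqComp p l), τ)] := by
  induction l with
  | nil =>
    intro _ p τ cs hch hhd B σf hlast hstuck
    cases cs with
    | nil => simp at hhd
    | cons c0 cs' =>
      rw [List.head?_cons] at hhd
      injection hhd with hc0; subst hc0
      cases cs' with
      | nil => rfl
      | cons c1 cs'' =>
        obtain ⟨hR, hch'⟩ := List.isChain_cons_cons.mp hch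
        rcases c1 with ⟨o₁, σ₁⟩
        cases hR with
        | prim hp =>
          cases cs'' with
          | nil => simp at hlast
          | cons c2 _ => exact ((List.isChain_cons_cons.mp hch').1).elim
  | cons q l' ih =>
    intro hl p τ cs hch hhd B σf hlast hstuck
    have hl' : ∀ r ∈ l', safePrim r := fun r hr => hl r (by simp [hr])
    cases cs with
    | nil => simp at hhd
    | cons c0 cs' =>
      rw [List.head?_cons] at hhd
      injection hhd with hc0; subst hc0
      cases cs' with
      | nil => rfl
      | cons c1 cs'' =>
        obtain ⟨hR, hch'⟩ := List.isChain_cons_cons.mp hch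
        rcases c1 with ⟨o₁, σ₁⟩
        cases hR with
        | seqS hA => cases hA
        | seqE hA =>
          cases hA with
          | prim hp =>
            have hlast' : ((some (seqComp q l'), σ₁) :: cs'').getLast? = some (some B, σf) := by
              rwa [getLast?_cons_of_ne_nil _ (by simp)] at hlast
            have heq := ih hl' hch' rfl hlast' hstuck
            rw [heq, List.getLast?_singleton] at hlast'
            injection hlast' with hlast''
            obtain ⟨c, hc⟩ := seqComp_safe_step (hl q (by simp)) l' σ₁
            rw [hlast''] at hc
            exact (hstuck c hc).elim

lemma fcon_reach {F : Store I → Prop} {lc l : List (Store I)} (h : FCon F lc l) :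
    (∃ σ ∈ lc, F σ) → ∃ σ ∈ l, F σ := by
  induction h with
  | nil => exact id
  | @keep σ lc l _ ih =>
    rintro ⟨σ', hm, hFσ⟩
    rcases List.mem_cons.mp hm with rfl | hm'
    · exact ⟨σ', List.mem_cons_self, hFσ⟩
    · obtain ⟨ρ, h1, h2⟩ := ih ⟨σ', hm', hFσ⟩
      exact ⟨ρ, List.mem_cons_of_mem _ h1, h2⟩
  | drop _ _ ih =>
    intro hx
    obtain ⟨ρ', h1, h2⟩ := ih hx
    exact ⟨ρ', List.mem_cons_of_mem _ h1, h2⟩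

/-- Part 1 as a standalone lemma. -/
lemma glist_contraction {p : Prim I G} {l : List (Prim I G)}
    (hl : ∀ q ∈ l, safePrim q) {F : Store I → Prop}
    (hF : ∀ t : I, Prim.tell t ∈ l → ∀ σ : Store I, F (t ::ₘ σ) ↔ F σ)
    (τ : Store I) : ∀ h ∈ Oh (Agent.glist p l) τ,
      ∃ h' ∈ Oh (seqComp p l) τ, FPCon F h h' := by
  intro h hmem
  rcases hmem with ⟨cs, hch, hhd, hcase⟩ | ⟨f, hf0, hfs, hh⟩
  · rcases gl_chain_inv hch hhd with heq | ⟨ρ, φ, hp, hle, heq⟩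
    · subst heq
      rcases hcase with ⟨⟨σ, hlast⟩, hh⟩ | ⟨⟨B, σ, hlast, hstuck⟩, hh⟩
      · simp at hlast
      · rw [List.getLast?_singleton] at hlast
        injection hlast with hlast'
        injection hlast' with h1 h2
        injection h1 with h1
        subst h1; subst h2
        have hpstuck := prim_stuck_of_gl hl hstuck
        refine ⟨Hist.fin [τ] false, Or.inl ⟨[(some (seqComp p l), τ)],
          List.isChain_singleton _, rfl, Or.inr ⟨⟨seqComp p l, τ, rfl,
            sc_stuck_of_prim hpstuck⟩, rfl⟩⟩, ?_⟩
        rw [hh]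
        exact ⟨rfl, .keep .nil⟩
    · subst heq
      rcases hcase with ⟨⟨σ, hlast⟩, hh⟩ | ⟨⟨B, σ, hlast, hstuck⟩, hh⟩
      · have hφ := listExec_eq hl hle
        subst hφ
        refine ⟨Hist.fin (τ :: storesOf l ρ) true, Or.inl ⟨(some (seqComp p l), τ) :: scConfs l ρ,
          chain_scConfs hl hp, rfl, Or.inl ⟨⟨finalStore l ρ, ?_⟩, ?_⟩⟩, ?_⟩
        · rw [getLast?_cons_of_ne_nil _ (scConfs_ne_nil l ρ)]
          exact getLast?_scConfs l ρ
        · rw [List.map_cons, map_snd_scConfs]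
        · rw [hh]
          exact ⟨rfl, .keep (fcon_storesOf hF ρ)⟩
      · simp at hlast
  · exact (no_inf f hfs).elim

end Bach

/-- if `p₁,…,pₙ` are tell or graphical primitives whose told si-terms do
not affect the truth value of the propositional state formula `F` on any store, then the
guarded list `GL = [p → p₁,…,pₙ]` is an F-preserving contraction of
`SC = p; p₁; ⋯; pₙ`: for every store `τ`, `Oh(GL)(τ) ≪_F Oh(SC)(τ)`.  It follows that
`Reach(F)` holds of the executions of `SC` from any store `τ` iff it holds of the
executions of `GL` from `τ`. -/
theorem glist_F_preserving (I G : Type) (p : Prim I G) (l : List (Prim I G))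
    (hl : ∀ q ∈ l, safePrim q) (F : Store I → Prop)
    (hF : ∀ t : I, Prim.tell t ∈ l → ∀ σ : Store I, F (t ::ₘ σ) ↔ F σ) :
    (∀ τ : Store I, ∀ h ∈ Oh (Agent.glist p l) τ,
        ∃ h' ∈ Oh (seqComp p l) τ, FPCon F h h') ∧
    (∀ τ : Store I,
        (∃ h ∈ Oh (seqComp p l) τ, histReach F h) ↔
        (∃ h ∈ Oh (Agent.glist p l) τ, histReach F h)) := by
  refine ⟨fun τ => glist_contraction hl hF τ, fun τ => ⟨?_, ?_⟩⟩
  · -- SC reaches F → GL reaches F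
    rintro ⟨h', hmem', hr⟩
    rcases hmem' with ⟨cs, hch, hhd, hcase⟩ | ⟨f, hf0, hfs, hh⟩
    · rcases hcase with ⟨⟨σf, hlast⟩, hh⟩ | ⟨⟨B, σf, hlast, hstuck⟩, hh⟩
      · obtain ⟨ρ, hp, heq⟩ := sc_chain_success hl hch hhd hlast
        subst heq; subst hh
        rw [List.map_cons, map_snd_scConfs] at hr
        obtain ⟨σ, hσm, hFσ⟩ := hr
        refine ⟨Hist.fin [τ, finalStore l ρ] true,
          Or.inl ⟨[(some (Agent.glist p l), τ), (none, finalStore l ρ)],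
            List.isChain_pair.mpr (Step.glist hp (listExec_finalStore hl ρ)), rfl,
            Or.inl ⟨⟨finalStore l ρ, rfl⟩, rfl⟩⟩, ?_⟩
        rcases List.mem_cons.mp hσm with rfl | hσm'
        · exact ⟨σ, by simp, hFσ⟩
        · exact ⟨finalStore l ρ, by simp, (F_mem_storesOf hF hσm').mp hFσ⟩
      · have heq := sc_chain_deadlock hl hch hhd hlast hstuck
        subst heq; subst hh
        rw [List.getLast?_singleton] at hlast
        injection hlast with hlast'
        injection hlast' with h1 h2
        injection h1 with h1
        subst h1; subst h2
        have hpstuck := prim_stuck_of_sc hstuck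
        refine ⟨Hist.fin [τ] false,
          Or.inl ⟨[(some (Agent.glist p l), τ)], List.isChain_singleton _, rfl,
            Or.inr ⟨⟨Agent.glist p l, τ, rfl, gl_stuck_of_prim hpstuck⟩, rfl⟩⟩, ?_⟩
        exact hr
    · exact (no_inf f hfs).elim
  · -- GL reaches F → SC reaches F
    rintro ⟨h, hmem, hr⟩
    obtain ⟨h', hmem', hfp⟩ := glist_contraction hl hF τ h hmem
    refine ⟨h', hmem', ?_⟩
    cases h with
    | fin lc bc =>
      cases h' with
      | fin lf bf =>
        obtain ⟨-, hfc⟩ := hfp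
        exact fcon_reach hfc hr
      | inf f => exact hfp.elim
    | inf fc =>
      cases h' with
      | fin lf bf => exact hfp.elim
      | inf f =>
        obtain ⟨g, -, -, hg, -⟩ := hfp
        obtain ⟨n, hn⟩ := hr
        exact ⟨g n, by rw [← hg n]; exact hn⟩
end

section
/- There is no modular embedding of gdLg(get, tell) into rLg(get, tell): gdLg(get, tell) ≰ rLg(get, tell). That is, there exist no compositional coder C from the get/tell fragment with guarded lists into the get/tell fragment without guarded lists and element-wise termination-preserving decoder D_el such that for every agent A of gdLg(get, tell), Of(A) = {D_el(x) : x ∈ Of(C(A))}. -/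
open Bach


namespace NoEmbedAux

open Bach Relation

variable {I G : Type}

/-- The primitive kinds get and tell. -/
abbrev XK : Set PKind := ({PKind.get, PKind.tell} : Set PKind)

lemma ask_notin_XK : PKind.ask ∉ XK := by
  rintro (h | h) <;> exact PKind.noConfusion h

lemma nask_notin_XK : PKind.nask ∉ XK := by
  rintro (h | h) <;> exact PKind.noConfusion h

/-- An agent can make a step from a store. -/
def CanStep (A : Agent I G) (σ : Store I) : Prop := ∃ o τ, Step A σ o τ

/-- Good agents: get/tell/graphical primitives only and no guarded lists. -/
def GoodA (A : Agent I G) : Prop := agentIn XK A ∧ glFree A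

lemma step_good {A : Agent I G} {σ o τ} (h : Step A σ o τ) :
    GoodA A → ∀ {A'}, o = some A' → GoodA A' := by
  induction h with
  | prim _ => exact fun _ _ h => nomatch h
  | glist _ _ => exact fun _ _ h => nomatch h
  | seqE _ _ =>
      rintro hg A' hA'
      cases hA'
      exact ⟨hg.1.2, hg.2.2⟩
  | seqS _ ih =>
      rintro hg A' hA'
      cases hA'
      have := ih ⟨hg.1.1, hg.2.1⟩ rfl
      exact ⟨⟨this.1, hg.1.2⟩, ⟨this.2, hg.2.2⟩⟩
  | parLE _ _ =>
      rintro hg A' hA'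
      cases hA'
      exact ⟨hg.1.2, hg.2.2⟩
  | parLS _ ih =>
      rintro hg A' hA'
      cases hA'
      have := ih ⟨hg.1.1, hg.2.1⟩ rfl
      exact ⟨⟨this.1, hg.1.2⟩, ⟨this.2, hg.2.2⟩⟩
  | parRE _ _ =>
      rintro hg A' hA'
      cases hA'
      exact ⟨hg.1.1, hg.2.1⟩
  | parRS _ ih =>
      rintro hg A' hA'
      cases hA'
      have := ih ⟨hg.1.2, hg.2.2⟩ rfl
      exact ⟨⟨hg.1.1, this.1⟩, ⟨hg.2.1, this.2⟩⟩
  | choiceL _ ih => exact fun hg _ hA' => ih ⟨hg.1.1, hg.2.1⟩ hA'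
  | choiceR _ ih => exact fun hg _ hA' => ih ⟨hg.1.2, hg.2.2⟩ hA'

lemma primStep_mono {p : Prim I G} (hp : primIn XK p) {σ τ : Store I}
    (h : primStep p σ τ) (μ : Store I) : primStep p (σ + μ) (τ + μ) := by
  cases p with
  | tell t =>
      simp only [primStep] at h ⊢
      rw [h, Multiset.cons_add]
  | ask t => exact absurd hp ask_notin_XK
  | nask t => exact absurd hp nask_notin_XK
  | get t =>
      simp only [primStep] at h ⊢
      rw [h, Multiset.cons_add]
  | gr g =>
      simp only [primStep] at h ⊢
      rw [h]

lemma step_mono {A : Agent I G} {σ o τ} (h : Step A σ o τ) (μ : Store I) :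
    GoodA A → Step A (σ + μ) o (τ + μ) := by
  induction h with
  | prim hp => exact fun hg => .prim (primStep_mono hg.1 hp μ)
  | glist _ _ => exact fun hg => hg.2.elim
  | seqE _ ih => exact fun hg => .seqE (ih ⟨hg.1.1, hg.2.1⟩)
  | seqS _ ih => exact fun hg => .seqS (ih ⟨hg.1.1, hg.2.1⟩)
  | parLE _ ih => exact fun hg => .parLE (ih ⟨hg.1.1, hg.2.1⟩)
  | parLS _ ih => exact fun hg => .parLS (ih ⟨hg.1.1, hg.2.1⟩)
  | parRE _ ih => exact fun hg => .parRE (ih ⟨hg.1.2, hg.2.2⟩)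
  | parRS _ ih => exact fun hg => .parRS (ih ⟨hg.1.2, hg.2.2⟩)
  | choiceL _ ih => exact fun hg => .choiceL (ih ⟨hg.1.1, hg.2.1⟩)
  | choiceR _ ih => exact fun hg => .choiceR (ih ⟨hg.1.2, hg.2.2⟩)

/-- Add a multiset to the store of a configuration. -/
def addC (μ : Store I) (c : Conf I G) : Conf I G := (c.1, c.2 + μ)

/-- Goodness of (the agent of) a configuration. -/
def GoodC (c : Conf I G) : Prop := ∀ A, c.1 = some A → GoodA A

lemma cstep_good {c c' : Conf I G} (h : CStep c c') (hg : GoodC c) : GoodC c' := by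
  obtain ⟨o, σ⟩ := c
  cases o with
  | none => exact h.elim
  | some A =>
      obtain ⟨o', τ⟩ := c'
      intro A' hA'
      exact step_good h (hg A rfl) hA'

lemma cstep_mono {μ : Store I} {c c' : Conf I G} (h : CStep c c') (hg : GoodC c) :
    CStep (addC μ c) (addC μ c') := by
  obtain ⟨o, σ⟩ := c
  cases o with
  | none => exact h.elim
  | some A =>
      obtain ⟨o', τ⟩ := c'
      exact step_mono h μ (hg A rfl)

lemma rtg_mono {μ : Store I} {c d : Conf I G} (h : ReflTransGen CStep c d) :
    GoodC c → ReflTransGen CStep (addC μ c) (addC μ d) := by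
  induction h using ReflTransGen.head_induction_on with
  | refl => exact fun _ => ReflTransGen.refl
  | head hstep _ ih =>
      exact fun hg => ReflTransGen.head (cstep_mono hstep hg) (ih (cstep_good hstep hg))

lemma canStep_seq {A B : Agent I G} {σ} (h : CanStep A σ) : CanStep (A.seq B) σ := by
  obtain ⟨o, τ, h⟩ := h
  cases o with
  | none => exact ⟨some B, τ, .seqE h⟩
  | some A' => exact ⟨some (A'.seq B), τ, .seqS h⟩

lemma canStep_parL {A B : Agent I G} {σ} (h : CanStep A σ) : CanStep (A.par B) σ := by
  obtain ⟨o, τ, h⟩ := h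
  cases o with
  | none => exact ⟨some B, τ, .parLE h⟩
  | some A' => exact ⟨some (A'.par B), τ, .parLS h⟩

lemma canStep_parR {A B : Agent I G} {σ} (h : CanStep B σ) : CanStep (A.par B) σ := by
  obtain ⟨o, τ, h⟩ := h
  cases o with
  | none => exact ⟨some A, τ, .parRE h⟩
  | some B' => exact ⟨some (A.par B'), τ, .parRS h⟩

lemma canStep_choiceL {A B : Agent I G} {σ} (h : CanStep A σ) : CanStep (A.choice B) σ := by
  obtain ⟨o, τ, h⟩ := h
  exact ⟨o, τ, .choiceL h⟩

lemma canStep_choiceR {A B : Agent I G} {σ} (h : CanStep B σ) : CanStep (A.choice B) σ := by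
  obtain ⟨o, τ, h⟩ := h
  exact ⟨o, τ, .choiceR h⟩

/-- A good agent that can step from `σ + σ'` can step from `σ` or from `σ'`. -/
lemma canstep_split {A : Agent I G} {s o τ} (h : Step A s o τ) :
    GoodA A → ∀ σ σ' : Store I, s = σ + σ' → CanStep A σ ∨ CanStep A σ' := by
  induction h with
  | @prim p σ0 τ0 hp =>
      intro hg σ σ' hs
      cases p with
      | tell t => exact Or.inl ⟨none, t ::ₘ σ, .prim rfl⟩
      | ask t => exact absurd hg.1 ask_notin_XK
      | nask t => exact absurd hg.1 nask_notin_XK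
      | get t =>
          have ht : t ∈ σ + σ' := by
            rw [← hs]
            simp only [primStep] at hp
            rw [hp]
            exact Multiset.mem_cons_self t τ0
          rcases Multiset.mem_add.mp ht with h1 | h1
          · obtain ⟨ρ, hρ⟩ := Multiset.exists_cons_of_mem h1
            exact Or.inl ⟨none, ρ, .prim hρ⟩
          · obtain ⟨ρ, hρ⟩ := Multiset.exists_cons_of_mem h1
            exact Or.inr ⟨none, ρ, .prim hρ⟩
      | gr g => exact Or.inl ⟨none, σ, .prim rfl⟩
  | glist _ _ => exact fun hg => hg.2.elim
  | seqE _ ih =>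
      exact fun hg σ σ' hs =>
        (ih ⟨hg.1.1, hg.2.1⟩ σ σ' hs).imp canStep_seq canStep_seq
  | seqS _ ih =>
      exact fun hg σ σ' hs =>
        (ih ⟨hg.1.1, hg.2.1⟩ σ σ' hs).imp canStep_seq canStep_seq
  | parLE _ ih =>
      exact fun hg σ σ' hs =>
        (ih ⟨hg.1.1, hg.2.1⟩ σ σ' hs).imp canStep_parL canStep_parL
  | parLS _ ih =>
      exact fun hg σ σ' hs =>
        (ih ⟨hg.1.1, hg.2.1⟩ σ σ' hs).imp canStep_parL canStep_parL
  | parRE _ ih =>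
      exact fun hg σ σ' hs =>
        (ih ⟨hg.1.2, hg.2.2⟩ σ σ' hs).imp canStep_parR canStep_parR
  | parRS _ ih =>
      exact fun hg σ σ' hs =>
        (ih ⟨hg.1.2, hg.2.2⟩ σ σ' hs).imp canStep_parR canStep_parR
  | choiceL _ ih =>
      exact fun hg σ σ' hs =>
        (ih ⟨hg.1.1, hg.2.1⟩ σ σ' hs).imp canStep_choiceL canStep_choiceL
  | choiceR _ ih =>
      exact fun hg σ σ' hs =>
        (ih ⟨hg.1.2, hg.2.2⟩ σ σ' hs).imp canStep_choiceR canStep_choiceR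

/-- Size of an agent (steps strictly decrease it). -/
def asize : Agent I G → ℕ
  | .prim _ => 1
  | .glist _ _ => 1
  | .seq A B => asize A + asize B
  | .par A B => asize A + asize B
  | .choice A B => asize A + asize B + 1

lemma asize_pos (A : Agent I G) : 0 < asize A := by
  induction A with
  | prim _ => exact Nat.one_pos
  | glist _ _ => exact Nat.one_pos
  | seq A B ihA ihB => simp only [asize]; omega
  | par A B ihA ihB => simp only [asize]; omega
  | choice A B ihA ihB => simp only [asize]; omega

lemma step_size {A : Agent I G} {σ o τ} (h : Step A σ o τ) :
    ∀ {A'}, o = some A' → asize A' < asize A := by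
  induction h with
  | prim _ => intro _ h; cases h
  | glist _ _ => intro _ h; cases h
  | @seqE A B _ _ _ =>
      intro A' h
      cases h
      have := asize_pos A
      simp only [asize]; omega
  | @seqS A A0 B _ _ _ ih =>
      intro A' h
      cases h
      have := ih rfl
      simp only [asize]; omega
  | @parLE A B _ _ _ =>
      intro A' h
      cases h
      have := asize_pos A
      simp only [asize]; omega
  | @parLS A A0 B _ _ _ ih =>
      intro A' h
      cases h
      have := ih rfl
      simp only [asize]; omega
  | @parRE A B _ _ _ =>
      intro A' h
      cases h
      have := asize_pos B
      simp only [asize]; omega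
  | @parRS A B B0 _ _ _ ih =>
      intro A' h
      cases h
      have := ih rfl
      simp only [asize]; omega
  | @choiceL A B _ _ _ _ ih =>
      intro A' h
      have := ih h
      simp only [asize]; omega
  | @choiceR A B _ _ _ _ ih =>
      intro A' h
      have := ih h
      simp only [asize]; omega

/-- Every configuration has a maximal finite computation. -/
lemma exists_maximal_aux : ∀ n, ∀ A : Agent I G, asize A < n → ∀ σ : Store I,
    ∃ c' : Conf I G, ReflTransGen CStep ((some A, σ) : Conf I G) c' ∧
      ∀ c'', ¬ CStep c' c'' := by
  intro n
  induction n with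
  | zero => intro A h; exact absurd h (Nat.not_lt_zero _)
  | succ n ih =>
      intro A hA σ
      by_cases hcs : CanStep A σ
      · obtain ⟨o, τ, hst⟩ := hcs
        cases o with
        | none =>
            refine ⟨(none, τ), ReflTransGen.single
              (show CStep ((some A, σ) : Conf I G) (none, τ) from hst), fun c'' h => h⟩
        | some A' =>
            obtain ⟨c', h1, h2⟩ := ih A' (by
              have := step_size hst rfl
              omega) τ
            exact ⟨c', ReflTransGen.head (show CStep ((some A, σ) : Conf I G) (some A', τ) from hst) h1, h2⟩
      · refine ⟨(some A, σ), ReflTransGen.refl, fun c'' h => ?_⟩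
        obtain ⟨o2, τ2⟩ := c''
        exact hcs ⟨o2, τ2, h⟩

lemma exists_maximal (A : Agent I G) (σ : Store I) :
    ∃ c' : Conf I G, ReflTransGen CStep ((some A, σ) : Conf I G) c' ∧
      ∀ c'', ¬ CStep c' c'' :=
  exists_maximal_aux (asize A + 1) A (by omega) σ

/-- Lifting a computation through sequential composition. -/
def seqC (B : Agent I G) : Conf I G → Conf I G
  | (some A, σ) => (some (A.seq B), σ)
  | (none, σ) => (some B, σ)

lemma cstep_seq {B : Agent I G} {c c' : Conf I G} (h : CStep c c') :
    CStep (seqC B c) (seqC B c') := by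
  obtain ⟨o, σ⟩ := c
  cases o with
  | none => exact h.elim
  | some A =>
      obtain ⟨o', τ⟩ := c'
      cases o' with
      | none => exact Step.seqE h
      | some A' => exact Step.seqS h

lemma rtg_seq {B : Agent I G} {c d : Conf I G} (h : ReflTransGen CStep c d) :
    ReflTransGen CStep (seqC B c) (seqC B d) :=
  ReflTransGen.lift (seqC B) (fun _ _ => cstep_seq) _ _ h

/-! ### Concrete source agents -/

variable (a : I)

/-- `tell a`. -/
def tA : Agent I G := .prim (.tell a)
/-- `get a`. -/
def gA : Agent I G := .prim (.get a)
/-- The guarded list `[get a → get a]`. -/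
def Ast : Agent I G := .glist (.get a) [.get a]

def src1 : Agent I G := (tA a).seq (Ast a)
def src2 : Agent I G := (tA a).seq ((Ast a).choice (gA a))
def src3 : Agent I G := (tA a).seq ((tA a).seq (Ast a))

lemma tA_in : agentIn XK (tA a : Agent I G) := by
  simp [tA, agentIn, primIn, XK]

lemma gA_in : agentIn XK (gA a : Agent I G) := by
  simp [gA, agentIn, primIn, XK]

lemma Ast_in : agentIn XK (Ast a : Agent I G) := by
  simp [Ast, agentIn, primIn, XK]

lemma choice_in : agentIn XK (((Ast a).choice (gA a)) : Agent I G) := by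
  show agentIn XK (Ast a : Agent I G) ∧ agentIn XK (gA a : Agent I G)
  exact ⟨Ast_in a, gA_in a⟩

lemma src1_in : agentIn XK (src1 a : Agent I G) := by
  show agentIn XK (tA a : Agent I G) ∧ agentIn XK (Ast a : Agent I G)
  exact ⟨tA_in a, Ast_in a⟩

lemma src2_in : agentIn XK (src2 a : Agent I G) := by
  show agentIn XK (tA a : Agent I G) ∧ agentIn XK (((Ast a).choice (gA a)) : Agent I G)
  exact ⟨tA_in a, choice_in a⟩

lemma src3_in : agentIn XK (src3 a : Agent I G) := by
  show agentIn XK (tA a : Agent I G) ∧ agentIn XK (((tA a).seq (Ast a)) : Agent I G)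
  exact ⟨tA_in a, src1_in a⟩

lemma tA_mem : (tA a : Agent I G) ∈ gdLg XK := by
  show agentIn XK (tA a : Agent I G); exact tA_in a
lemma gA_mem : (gA a : Agent I G) ∈ gdLg XK := by
  show agentIn XK (gA a : Agent I G); exact gA_in a
lemma Ast_mem : (Ast a : Agent I G) ∈ gdLg XK := by
  show agentIn XK (Ast a : Agent I G); exact Ast_in a
lemma choice_mem : ((Ast a).choice (gA a) : Agent I G) ∈ gdLg XK := by
  show agentIn XK (((Ast a).choice (gA a)) : Agent I G); exact choice_in a
lemma src1_mem : (src1 a : Agent I G) ∈ gdLg XK := by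
  show agentIn XK (src1 a : Agent I G); exact src1_in a
lemma src2_mem : (src2 a : Agent I G) ∈ gdLg XK := by
  show agentIn XK (src2 a : Agent I G); exact src2_in a
lemma seq_tA_Ast_mem : ((tA a).seq (Ast a) : Agent I G) ∈ gdLg XK := by
  show agentIn XK (src1 a : Agent I G); exact src1_in a
lemma src3_mem : (src3 a : Agent I G) ∈ gdLg XK := by
  show agentIn XK (src3 a : Agent I G); exact src3_in a

/-- Inversion for a step of `tell a; X`. -/
lemma step_tellseq {X : Agent I G} {σ o τ} (h : Step ((tA a).seq X) σ o τ) :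
    o = some X ∧ τ = a ::ₘ σ := by
  cases h with
  | seqE h1 =>
      cases h1 with
      | prim hp =>
          simp only [primStep] at hp
          exact ⟨rfl, hp⟩
  | seqS h1 => cases h1

/-- `[get a → get a]` is stuck at `{a}`. -/
lemma astar_stuck {o τ} : ¬ Step (Ast a : Agent I G) (a ::ₘ 0) o τ := by
  intro h
  cases h with
  | @glist _ _ _ ρ _ hp hl =>
      simp only [primStep] at hp
      have hρ : (0 : Store I) = ρ := (Multiset.cons_inj_right a).mp hp
      subst hρ
      obtain ⟨ρ', hp', -⟩ := hl
      simp only [primStep] at hp'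
      exact Multiset.cons_ne_zero hp'.symm

/-- The unique step of `[get a → get a]` at `{a,a}`. -/
lemma astar_step2 {o τ} (h : Step (Ast a : Agent I G) (a ::ₘ a ::ₘ 0) o τ) :
    o = none ∧ τ = 0 := by
  cases h with
  | @glist _ _ _ ρ _ hp hl =>
      simp only [primStep] at hp
      have hρ : (a ::ₘ 0 : Store I) = ρ := (Multiset.cons_inj_right a).mp hp
      subst hρ
      obtain ⟨ρ', hp', hl'⟩ := hl
      simp only [primStep] at hp'
      have hρ' : (0 : Store I) = ρ' := (Multiset.cons_inj_right a).mp hp'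
      subst hρ'
      simp only [listExec] at hl'
      exact ⟨rfl, hl'⟩

/-- `[get a → get a]` can step at `{a,a}`. -/
lemma astar_canstep2 : CanStep (Ast a : Agent I G) (a ::ₘ a ::ₘ 0) := by
  refine ⟨none, 0, .glist (p := .get a) (ρ := a ::ₘ 0) rfl ?_⟩
  exact ⟨0, rfl, rfl⟩

/-- Steps of the choice `[get a → get a] + get a` at `{a}`. -/
lemma choice_step {o τ} (h : Step ((Ast a).choice (gA a) : Agent I G) (a ::ₘ 0) o τ) :
    o = none ∧ τ = 0 := by
  cases h with
  | choiceL h1 => exact absurd h1 (astar_stuck a)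
  | choiceR h1 =>
      cases h1 with
      | prim hp =>
          simp only [primStep] at hp
          have : (0 : Store I) = τ := (Multiset.cons_inj_right a).mp hp
          exact ⟨rfl, this.symm⟩

/-- Reachable configurations of `tell a; [get a → get a]` from the empty store. -/
lemma reach_src1 : ∀ c : Conf I G,
    ReflTransGen CStep ((some (src1 a), 0) : Conf I G) c →
      c = (some (src1 a), 0) ∨ c = (some (Ast a), a ::ₘ 0) := by
  intro c h
  induction h with
  | refl => exact Or.inl rfl
  | @tail b c _ h2 ih =>
      rcases ih with rfl | rfl
      · obtain ⟨o, τ⟩ := c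
        obtain ⟨ho, hτ⟩ := step_tellseq a h2
        subst ho; subst hτ
        right; rfl
      · obtain ⟨o, τ⟩ := c
        exact absurd h2 (astar_stuck a)

/-- Reachable configurations of `tell a; ([get a → get a] + get a)`. -/
lemma reach_src2 : ∀ c : Conf I G,
    ReflTransGen CStep ((some (src2 a), 0) : Conf I G) c →
      c = (some (src2 a), 0) ∨ c = (some ((Ast a).choice (gA a)), a ::ₘ 0) ∨
        c = ((none : Option (Agent I G)), 0) := by
  intro c h
  induction h with
  | refl => exact Or.inl rfl
  | @tail b c _ h2 ih =>
      rcases ih with rfl | rfl | rfl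
      · obtain ⟨o, τ⟩ := c
        obtain ⟨ho, hτ⟩ := step_tellseq a h2
        subst ho; subst hτ
        right; left; rfl
      · obtain ⟨o, τ⟩ := c
        obtain ⟨ho, hτ⟩ := choice_step a h2
        subst ho; subst hτ
        right; right; rfl
      · exact h2.elim

/-- Reachable configurations of `tell a; (tell a; [get a → get a])`. -/
lemma reach_src3 : ∀ c : Conf I G,
    ReflTransGen CStep ((some (src3 a), 0) : Conf I G) c →
      c = (some (src3 a), 0) ∨ c = (some ((tA a).seq (Ast a)), a ::ₘ 0) ∨
        c = (some (Ast a), a ::ₘ a ::ₘ 0) ∨ c = ((none : Option (Agent I G)), 0) := by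
  intro c h
  induction h with
  | refl => exact Or.inl rfl
  | @tail b c _ h2 ih =>
      rcases ih with rfl | rfl | rfl | rfl
      · obtain ⟨o, τ⟩ := c
        obtain ⟨ho, hτ⟩ := step_tellseq a h2
        subst ho; subst hτ
        right; left; rfl
      · obtain ⟨o, τ⟩ := c
        obtain ⟨ho, hτ⟩ := step_tellseq a h2
        subst ho; subst hτ
        right; right; left; rfl
      · obtain ⟨o, τ⟩ := c
        obtain ⟨ho, hτ⟩ := astar_step2 a h2
        subst ho; subst hτ
        right; right; right; rfl
      · exact h2.elim

/-- `tell a; [get a → get a]` has no successful observable. -/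
lemma noTrue_src1 (σ : Store I) : ((σ, true) : Store I × Bool) ∉ Obs (src1 a : Agent I G) := by
  rintro (⟨hr, -⟩ | ⟨-, hm⟩)
  · rcases reach_src1 a _ hr with h | h <;> simp at h
  · simp at hm

/-- `tell a; ([get a → get a] + get a)` has no deadlock observable. -/
lemma noFalse_src2 (σ : Store I) : ((σ, false) : Store I × Bool) ∉ Obs (src2 a : Agent I G) := by
  rintro (⟨-, hm⟩ | ⟨⟨B, hr, hstuck⟩, -⟩)
  · simp at hm
  · rcases reach_src2 a _ hr with h | h | h
    · rw [Prod.ext_iff] at h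
      obtain ⟨hB, hσ⟩ := h
      cases Option.some.inj hB
      subst hσ
      exact hstuck (some ((Ast a).choice (gA a)), a ::ₘ 0) (Step.seqE (Step.prim rfl))
    · rw [Prod.ext_iff] at h
      obtain ⟨hB, hσ⟩ := h
      cases Option.some.inj hB
      subst hσ
      exact hstuck ((none : Option (Agent I G)), 0) (Step.choiceR (Step.prim rfl))
    · rw [Prod.ext_iff] at h
      exact Option.some_ne_none _ h.1

/-- `tell a; (tell a; [get a → get a])` has no deadlock observable. -/
lemma noFalse_src3 (σ : Store I) : ((σ, false) : Store I × Bool) ∉ Obs (src3 a : Agent I G) := by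
  rintro (⟨-, hm⟩ | ⟨⟨B, hr, hstuck⟩, -⟩)
  · simp at hm
  · rcases reach_src3 a _ hr with h | h | h | h
    · rw [Prod.ext_iff] at h
      obtain ⟨hB, hσ⟩ := h
      cases Option.some.inj hB
      subst hσ
      exact hstuck (some ((tA a).seq (Ast a)), a ::ₘ 0) (Step.seqE (Step.prim rfl))
    · rw [Prod.ext_iff] at h
      obtain ⟨hB, hσ⟩ := h
      cases Option.some.inj hB
      subst hσ
      exact hstuck (some (Ast a), a ::ₘ a ::ₘ 0) (Step.seqE (Step.prim rfl))
    · rw [Prod.ext_iff] at h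
      obtain ⟨hB, hσ⟩ := h
      cases Option.some.inj hB
      subst hσ
      obtain ⟨o2, τ2, hst⟩ := astar_canstep2 a
      exact hstuck (o2, τ2) hst
    · rw [Prod.ext_iff] at h
      exact Option.some_ne_none _ h.1

/-- `tell a` has the successful observable `({a}, δ⁺)`. -/
lemma obs_tA : ((a ::ₘ 0, true) : Store I × Bool) ∈ Obs (tA a : Agent I G) :=
  Or.inl ⟨ReflTransGen.single (Step.prim rfl), rfl⟩

end NoEmbedAux


open NoEmbedAux Relation

/-- there is no modular embedding of `gdLg(get, tell)` into
`rLg(get, tell)` (assuming at least two distinct si-terms). -/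
theorem no_modEmbed_get_tell (I G : Type) (a b : I) (hab : a ≠ b) :
    ¬ ModEmbed (gdLg ({PKind.get, PKind.tell} : Set PKind) : Set (Agent I G))
        (rLg ({PKind.get, PKind.tell} : Set PKind)) := by
  rintro ⟨C, D, hmapsto, hseq, hpar, hchoice, hDmark, hobs⟩
  clear hpar
  set T : Agent I G := C (tA a) with hT
  set Z : Agent I G := C (Ast a) with hZ
  have hTg : GoodA T := hmapsto _ (tA_mem a)
  have hZg : GoodA Z := hmapsto _ (Ast_mem a)
  -- extract a successful computation of T
  have h1 : ((a ::ₘ 0 : Store I), true) ∈ D '' Obs T := by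
    rw [← hobs _ (tA_mem a)]
    exact obs_tA a
  obtain ⟨x, hxObs, hxD⟩ := h1
  have hx2 : x.2 = true := by
    have := hDmark x
    rw [hxD] at this
    exact this.symm
  have hTrun : ReflTransGen CStep ((some T, (0 : Store I)) : Conf I G) (none, x.1) := by
    rcases hxObs with ⟨hr, -⟩ | ⟨-, hm⟩
    · exact hr
    · rw [hx2] at hm; exact Bool.noConfusion hm
  set θ : Store I := x.1 with hθ
  -- (B) : Z never succeeds from θ
  have hC1 : C (src1 a) = T.seq Z := hseq _ _ (tA_mem a) (Ast_mem a)
  have hZnosucc : ∀ δ : Store I,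
      ¬ ReflTransGen CStep ((some Z, θ) : Conf I G) (none, δ) := by
    intro δ hs
    have hrun : ReflTransGen CStep ((some (T.seq Z), (0 : Store I)) : Conf I G) (none, δ) := by
      have h2 := rtg_seq (B := Z) hTrun
      exact ReflTransGen.trans h2 hs
    have hmem : ((δ, true) : Store I × Bool) ∈ Obs (C (src1 a)) := by
      rw [hC1]
      exact Or.inl ⟨hrun, rfl⟩
    have himg : D (δ, true) ∈ Obs (src1 a : Agent I G) := by
      rw [hobs _ (src1_mem a)]
      exact Set.mem_image_of_mem D hmem
    have hm2 : (D (δ, true)).2 = true := hDmark _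
    have heq : D (δ, true) = ((D (δ, true)).1, true) := Prod.ext_iff.mpr ⟨rfl, hm2⟩
    exact noTrue_src1 a (D (δ, true)).1 (heq ▸ himg)
  -- (L) : Z is stuck at θ
  have hC2 : C (src2 a) = T.seq (Z.choice (C (gA a))) := by
    unfold src2
    rw [hseq _ _ (tA_mem a) (choice_mem a), hchoice _ _ (Ast_mem a) (gA_mem a)]
  have hZstuck : ∀ o τ, ¬ Step Z θ o τ := by
    intro o τ hstep
    have hr1 : ReflTransGen CStep
        ((some (T.seq (Z.choice (C (gA a)))), (0 : Store I)) : Conf I G)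
        (some (Z.choice (C (gA a))), θ) := rtg_seq (B := Z.choice (C (gA a))) hTrun
    cases o with
    | none => exact hZnosucc τ (ReflTransGen.single hstep)
    | some Z1 =>
        obtain ⟨c', hr', hmax'⟩ := exists_maximal Z1 τ
        obtain ⟨oB, ρ⟩ := c'
        cases oB with
        | none =>
            exact hZnosucc ρ (ReflTransGen.head
              (show CStep ((some Z, θ) : Conf I G) (some Z1, τ) from hstep) hr')
        | some B =>
            have hstep2 : CStep ((some (Z.choice (C (gA a))), θ) : Conf I G) (some Z1, τ) :=
              Step.choiceL hstep
            have hrun : ReflTransGen CStep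
                ((some (T.seq (Z.choice (C (gA a)))), (0 : Store I)) : Conf I G)
                (some B, ρ) :=
              ReflTransGen.trans hr1 (ReflTransGen.head hstep2 hr')
            have hmem : ((ρ, false) : Store I × Bool) ∈ Obs (C (src2 a)) := by
              rw [hC2]
              exact Or.inr ⟨⟨B, hrun, hmax'⟩, rfl⟩
            have himg : D (ρ, false) ∈ Obs (src2 a : Agent I G) := by
              rw [hobs _ (src2_mem a)]
              exact Set.mem_image_of_mem D hmem
            have hm2 : (D (ρ, false)).2 = false := hDmark _
            have heq : D (ρ, false) = ((D (ρ, false)).1, false) := Prod.ext_iff.mpr ⟨rfl, hm2⟩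
            exact noFalse_src2 a (D (ρ, false)).1 (heq ▸ himg)
  -- (M) : but Z must move at θ + θ
  have hC3 : C (src3 a) = T.seq (T.seq Z) := by
    unfold src3
    rw [hseq _ _ (tA_mem a) (seq_tA_Ast_mem a), hseq _ _ (tA_mem a) (Ast_mem a)]
  have hTrun2 : ReflTransGen CStep ((some T, θ) : Conf I G) (none, θ + θ) := by
    have h2 := rtg_mono (μ := θ) hTrun (by
      intro A hA
      cases Option.some.inj hA
      exact hTg)
    simpa [addC] using h2
  have hr1 : ReflTransGen CStep
      ((some (T.seq (T.seq Z)), (0 : Store I)) : Conf I G) (some (T.seq Z), θ) :=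
    rtg_seq (B := T.seq Z) hTrun
  have hr2 : ReflTransGen CStep ((some (T.seq Z), θ) : Conf I G) (some Z, θ + θ) :=
    rtg_seq (B := Z) hTrun2
  have hstuck2 : ∀ c'', ¬ CStep ((some Z, θ + θ) : Conf I G) c'' := by
    rintro ⟨o, τ⟩ h
    rcases canstep_split h hZg θ θ rfl with ⟨o', τ', h'⟩ | ⟨o', τ', h'⟩ <;>
      exact hZstuck o' τ' h'
  have hmem : ((θ + θ, false) : Store I × Bool) ∈ Obs (C (src3 a)) := by
    rw [hC3]
    exact Or.inr ⟨⟨Z, ReflTransGen.trans hr1 hr2, hstuck2⟩, rfl⟩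
  have himg : D (θ + θ, false) ∈ Obs (src3 a : Agent I G) := by
    rw [hobs _ (src3_mem a)]
    exact Set.mem_image_of_mem D hmem
  have hm2 : (D (θ + θ, false)).2 = false := hDmark _
  have heq : D (θ + θ, false) = ((D (θ + θ, false)).1, false) := Prod.ext_iff.mpr ⟨rfl, hm2⟩
  exact noFalse_src3 a (D (θ + θ, false)).1 (heq ▸ himg)
end
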